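/- Let F be the family of all rainbow-bisecting empty circular annuli (RBCAs) for P whose closed inner disk contains at least two points of P. Suppose F is nonempty and A ∈ F has width greater than or equal to the width of every member of F. Then there exists A' ∈ F of the same width as A satisfying one of the following two configurations: (i) A' is not special and each of the inner circle and the outer circle of A' contains at least two points of P on its boundary; (ii) A' is special, the outer circle of A' contains at least one point of P, and the inner circle of A' contains at least two points of P. -/

import Mathlib

set_option maxHeartbeats 1000000
open RealInnerProductSpace



/-- The Euclidean plane. -/
abbrev Plane : Type := EuclideanSpace ℝ (Fin 2)

noncomputable instance : DecidableEq Plane := Classical.decEq _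
private lemma le_of_sq_le'' {a b : ℝ} (h : a^2 ≤ b^2) (hb : 0 ≤ b) : a ≤ b := by nlinarith
private lemma eq_of_sq_eq'' {a b : ℝ} (h : a^2 = b^2) (ha : 0 ≤ a) (hb : 0 ≤ b) : a = b := by nlinarith
lemma norm_add_upper (x h : Plane) (hx : 0 < ‖x‖) :
    ‖x + h‖ ≤ ‖x‖ + ⟪x, h⟫/‖x‖ + ‖h‖^2/‖x‖ := by
  have hcs : ⟪x, h⟫ ≤ ‖x‖ * ‖h‖ := real_inner_le_norm x h
  have hb : (0:ℝ) ≤ ‖x‖ + ⟪x, h⟫/‖x‖ + ‖h‖^2/‖x‖ := by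
    have h1 : ‖x‖ + ⟪x, h⟫/‖x‖ + ‖h‖^2/‖x‖ = (‖x‖^2 + ⟪x,h⟫ + ‖h‖^2)/‖x‖ := by
      field_simp
    rw [h1]
    apply div_nonneg _ hx.le
    have hcs2 := abs_real_inner_le_norm x h
    nlinarith [sq_nonneg (‖x‖ - ‖h‖), neg_abs_le ⟪x,h⟫, hcs2]
  apply le_of_sq_le'' _ hb
  have hexp : ‖x + h‖^2 = ‖x‖^2 + 2*⟪x,h⟫ + ‖h‖^2 := by
    have := norm_sub_sq_real x (-h)
    have he : x - -h = x + h := by module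
    rw [he, inner_neg_right, norm_neg] at this
    rw [this]; ring
  rw [hexp]
  have h2 : (‖x‖ + ⟪x, h⟫/‖x‖ + ‖h‖^2/‖x‖)^2 = ((‖x‖^2 + ⟪x,h⟫ + ‖h‖^2)/‖x‖)^2 := by
    congr 1; field_simp
  rw [h2, div_pow, le_div_iff₀ (by positivity)]
  nlinarith [sq_nonneg (⟪x,h⟫ + ‖h‖^2), sq_nonneg ‖x‖, sq_nonneg ‖h‖, mul_pos hx hx]
lemma dist_sq_line (x c v : Plane) (hv : ‖v‖ = 1) (t : ℝ) :
    dist x (c + t • v)^2 = dist x c^2 + 2*t*⟪c - x, v⟫ + t^2 := by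
  rw [dist_eq_norm, dist_eq_norm]
  have h0 : x - (c + t • v) = (x - c) - t • v := by module
  rw [h0, norm_sub_sq_real, real_inner_smul_right, norm_smul]
  have h1 : ⟪x - c, v⟫ = -⟪c - x, v⟫ := by
    rw [← inner_neg_left]; congr 1; module
  rw [h1]
  simp [hv, Real.norm_eq_abs]
  ring
lemma pert (In Out : Finset Plane) (hIn : In.Nonempty) (hOut : Out.Nonempty)
    (c U : Plane) (hU : ‖U‖ = 1) (rin rout θ δ : ℝ)
    (hrin : 0 < rin) (hrr : rin < rout) (hδ : 0 < δ) (hδ2 : δ ≤ 2)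
    (hθ1 : θ ≤ 1) (hθ2 : -3 ≤ θ)
    (hInle : ∀ p ∈ In, dist p c ≤ rin)
    (hOutge : ∀ q ∈ Out, rout ≤ dist q c)
    (hInd : ∀ p ∈ In, dist p c = rin → ⟪c - p, U⟫ ≤ rin * θ)
    (hOutd : ∀ q ∈ Out, dist q c = rout → rout * (θ + δ) ≤ ⟪c - q, U⟫) :
    ∃ z ri ro, 0 ≤ ri ∧ ri ≤ ro ∧ (∀ p ∈ In, dist p z ≤ ri) ∧
      (∀ q ∈ Out, ro ≤ dist q z) ∧ rout - rin < ro - ri := by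
  classical
  set f : Plane → ℝ := fun p => if dist p c = rin then 1 else (rin - dist p c)/4 with hf
  set g : Plane → ℝ := fun q => if dist q c = rout then 1 else (dist q c - rout)/4 with hg
  set ε : ℝ := min (min (rin/4) (δ*rin/4)) (min (In.inf' hIn f) (Out.inf' hOut g)) with hε
  have hfpos : ∀ p ∈ In, 0 < f p := by
    intro p hp; by_cases h : dist p c = rin <;> simp [hf, h]
    exact lt_of_le_of_ne (hInle p hp) h
  have hgpos : ∀ q ∈ Out, 0 < g q := by
    intro q hq; by_cases h : dist q c = rout <;> simp [hg, h]
    exact lt_of_le_of_ne (hOutge q hq) (Ne.symm h)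
  have hεpos : 0 < ε := by
    apply lt_min (lt_min (by positivity) (by positivity))
    apply lt_min
    · exact (Finset.lt_inf'_iff hIn).2 (fun p hp => hfpos p hp)
    · exact (Finset.lt_inf'_iff hOut).2 (fun q hq => hgpos q hq)
  have hε1 : ε ≤ rin/4 := le_trans (min_le_left _ _) (min_le_left _ _)
  have hε2 : ε ≤ δ*rin/4 := le_trans (min_le_left _ _) (min_le_right _ _)
  have hε3 : ∀ p ∈ In, ε ≤ f p := fun p hp =>
    le_trans (min_le_right _ _) (le_trans (min_le_left _ _) (Finset.inf'_le f hp))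
  have hε4 : ∀ q ∈ Out, ε ≤ g q := fun q hq =>
    le_trans (min_le_right _ _) (le_trans (min_le_right _ _) (Finset.inf'_le g hq))
  refine ⟨c + ε • U, rin + ε*θ + ε^2/rin, rout + ε*(θ+δ), ?_, ?_, ?_, ?_, ?_⟩
  · have h0 : (0:ℝ) ≤ ε^2/rin := by positivity
    nlinarith [mul_le_mul_of_nonneg_left hθ2 hεpos.le]
  · have h0 : ε^2/rin ≤ ε*δ := by
      rw [div_le_iff₀ hrin]; nlinarith
    linarith
  · intro p hp
    by_cases hc : dist p c = rin
    · have h1 : dist p (c + ε • U) = ‖(p - c) + (-(ε • U))‖ := by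
        rw [dist_eq_norm]; congr 1; module
      have hnc : ‖p - c‖ = rin := by rw [← dist_eq_norm]; exact hc
      have h2 := norm_add_upper (p - c) (-(ε • U)) (by rw [hnc]; exact hrin)
      rw [hnc] at h2
      have h3 : ⟪p - c, -(ε • U)⟫ = ε * ⟪c - p, U⟫ := by
        rw [← neg_smul, real_inner_smul_right]
        have : ⟪p - c, U⟫ = -⟪c - p, U⟫ := by
          rw [← inner_neg_left]; congr 1; module
        rw [this]; ring
      have h4 : ‖-(ε • U)‖^2 = ε^2 := by
        rw [norm_neg, norm_smul, hU, Real.norm_eq_abs, abs_of_pos hεpos]; ring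
      rw [h1]
      refine le_trans h2 ?_
      rw [h3, h4]
      have h5 := hInd p hp hc
      have : ε * ⟪c - p, U⟫ / rin ≤ ε * θ := by
        rw [div_le_iff₀ hrin]
        calc ε * ⟪c - p, U⟫ ≤ ε * (rin * θ) := by
              exact mul_le_mul_of_nonneg_left h5 hεpos.le
          _ = ε * θ * rin := by ring
      linarith
    · have hlt : dist p c < rin := lt_of_le_of_ne (hInle p hp) hc
      have h1 : dist p (c + ε • U) ≤ dist p c + ε := by
        have := abs_dist_sub_le p (c + ε • U) c
        have h2 : dist (c + ε • U) c = ε := by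
          rw [dist_eq_norm]
          have : c + ε • U - c = ε • U := by module
          rw [this, norm_smul, hU, Real.norm_eq_abs, abs_of_pos hεpos]; ring
        calc dist p (c + ε • U) ≤ dist p c + dist c (c + ε • U) := dist_triangle _ _ _
          _ = dist p c + ε := by rw [dist_comm c, h2]
      have hεf := hε3 p hp
      have : f p = (rin - dist p c)/4 := by simp [hf, hc]
      rw [this] at hεf
      have hεθ : -(3*ε) ≤ ε * θ := by nlinarith
      have : dist p c + ε ≤ rin - 3*ε := by linarith
      have h0 : (0:ℝ) ≤ ε^2/rin := by positivity
      linarith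
  · intro q hq
    by_cases hc : dist q c = rout
    · have hnc : ‖c - q‖ = rout := by rw [← dist_eq_norm, dist_comm]; exact hc
      have hcs : ⟪c + ε • U - q, c - q⟫ ≤ ‖c + ε • U - q‖ * ‖c - q‖ :=
        real_inner_le_norm _ _
      have hsplit : ⟪c + ε • U - q, c - q⟫ = ⟪c - q, c - q⟫ + ε * ⟪c - q, U⟫ := by
        have h0 : c + ε • U - q = (c - q) + ε • U := by module
        rw [h0, inner_add_left, real_inner_smul_left, real_inner_comm U]
      have hself : ⟪c - q, c - q⟫ = rout^2 := by
        rw [real_inner_self_eq_norm_sq, hnc]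
      have hd := hOutd q hq hc
      have hdist : dist q (c + ε • U) = ‖c + ε • U - q‖ := by
        rw [dist_eq_norm]; rw [← norm_neg]; congr 1; module
      have hkey : rout^2 + ε * (rout * (θ + δ)) ≤ dist q (c + ε • U) * rout := by
        rw [hdist]
        calc rout^2 + ε * (rout * (θ + δ)) ≤ ⟪c - q, c - q⟫ + ε * ⟪c - q, U⟫ := by
              rw [hself]; exact add_le_add_right (mul_le_mul_of_nonneg_left hd hεpos.le) _
          _ = ⟪c + ε • U - q, c - q⟫ := hsplit.symm
          _ ≤ ‖c + ε • U - q‖ * ‖c - q‖ := hcs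
          _ = ‖c + ε • U - q‖ * rout := by rw [hnc]
      have hrout : 0 < rout := lt_trans hrin hrr
      nlinarith [hkey]
    · have hgt : rout < dist q c := lt_of_le_of_ne (hOutge q hq) (fun h => hc h.symm)
      have h1 : dist q c - ε ≤ dist q (c + ε • U) := by
        have h2 : dist (c + ε • U) c = ε := by
          rw [dist_eq_norm]
          have : c + ε • U - c = ε • U := by module
          rw [this, norm_smul, hU, Real.norm_eq_abs, abs_of_pos hεpos]; ring
        have h3 := dist_triangle q (c + ε • U) c
        rw [h2] at h3
        linarith
      have hεg := hε4 q hq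
      have : g q = (dist q c - rout)/4 := by simp [hg, hc]
      rw [this] at hεg
      have : ε * (θ + δ) ≤ 3 * ε := by nlinarith
      linarith
  · have h2 : (0:ℝ) < ε*δ - ε^2/rin := by
      rw [sub_pos, div_lt_iff₀ hrin]
      nlinarith
    linarith
lemma conv_unit_mem {W : Finset Plane} {v : Plane} (hv : ‖v‖ = 1)
    (hn : ∀ w ∈ W, ‖w‖ ≤ 1) (hmem : v ∈ convexHull ℝ (W : Set Plane)) :
    ∃ w ∈ W, w = v := by
  obtain ⟨wt, hwt0, hwt1, hwtc⟩ := Finset.mem_convexHull.1 hmem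
  have hcm : ∑ y ∈ W, wt y • y = v := by
    rw [← hwtc, Finset.centerMass_eq_of_sum_1 _ _ hwt1]; rfl
  have hinner : ∑ y ∈ W, wt y * ⟪y, v⟫ = 1 := by
    have h : ⟪∑ y ∈ W, wt y • y, v⟫ = ∑ y ∈ W, wt y * ⟪y, v⟫ := by
      rw [sum_inner]
      exact Finset.sum_congr rfl (fun y _ => real_inner_smul_left y v (wt y))
    rw [hcm] at h
    rw [← h, real_inner_self_eq_norm_sq, hv]; norm_num
  by_contra hno
  push_neg at hno
  have hlt : ∀ y ∈ W, 0 < wt y → ⟪y, v⟫ < 1 := by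
    intro y hy hw
    have hne := hno y hy
    have hcs : ⟪y, v⟫ ≤ ‖y‖ * ‖v‖ := real_inner_le_norm y v
    rw [hv, mul_one] at hcs
    have hle1 : ⟪y, v⟫ ≤ 1 := hcs.trans (hn y hy)
    rcases lt_or_eq_of_le hle1 with h | h
    · exact h
    · exfalso
      apply hne
      rw [h] at hcs
      have hy1' : ‖y‖ = 1 := le_antisymm (hn y hy) hcs
      have h2 : ‖y - v‖^2 = 0 := by rw [norm_sub_sq_real, hy1', hv, h]; norm_num
      have h3 := pow_eq_zero_iff (n := 2) (by norm_num) |>.1 h2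
      rwa [norm_sub_eq_zero_iff] at h3
  obtain ⟨y₀, hy₀, hy₀pos⟩ : ∃ y ∈ W, 0 < wt y := by
    by_contra hall
    push_neg at hall
    have h : ∑ y ∈ W, wt y = 0 :=
      Finset.sum_eq_zero (fun y hy => le_antisymm (hall y hy) (hwt0 y hy))
    rw [hwt1] at h; norm_num at h
  have hsum : ∑ y ∈ W, wt y * ⟪y, v⟫ < ∑ y ∈ W, wt y := by
    apply Finset.sum_lt_sum
    · intro y hy
      have hcs : ⟪y, v⟫ ≤ 1 := by
        have h := real_inner_le_norm y v
        rw [hv, mul_one] at h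
        exact h.trans (hn y hy)
      nlinarith [hwt0 y hy]
    · exact ⟨y₀, hy₀, by nlinarith [hlt y₀ hy₀ hy₀pos]⟩
  rw [hinner, hwt1] at hsum
  exact lt_irrefl _ hsum

lemma sep_lemma (W : Finset Plane) (hW : W.Nonempty) (hn : ∀ w ∈ W, ‖w‖ = 1)
    (v : Plane) (hv : ‖v‖ = 1) (hne : ∀ w ∈ W, w ≠ v) :
    ∃ U : Plane, ‖U‖ = 1 ∧ ∃ δ : ℝ, 0 < δ ∧ ∀ w ∈ W, ⟪v, U⟫ + δ ≤ ⟪w, U⟫ := by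
  have hnotmem : v ∉ convexHull ℝ (W : Set Plane) := by
    intro hmem
    obtain ⟨w, hw, hwv⟩ := conv_unit_mem hv (fun w hw => (hn w hw).le) hmem
    exact hne w hw hwv
  have hclosed : IsClosed (convexHull ℝ (W : Set Plane)) :=
    (W.finite_toSet.isCompact_convexHull ℝ).isClosed
  have hconv : Convex ℝ (convexHull ℝ (W : Set Plane)) := convex_convexHull _ _
  obtain ⟨f, u, hfu, huf⟩ := geometric_hahn_banach_closed_point hconv hclosed hnotmem
  obtain ⟨y, hy⟩ := (InnerProductSpace.toDual ℝ Plane).surjective f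
  have hyval : ∀ z : Plane, f z = ⟪y, z⟫ := by
    intro z; rw [← hy]; rfl
  have hy0 : y ≠ 0 := by
    intro h0
    obtain ⟨w, hw⟩ := hW
    have h1 := hfu w (subset_convexHull ℝ _ (by exact_mod_cast hw))
    have h2 := huf
    rw [hyval, h0] at h1 h2
    simp at h1 h2
    linarith
  have hny : 0 < ‖y‖ := norm_pos_iff.2 hy0
  have hδ : 0 < (f v - u)/‖y‖ := div_pos (sub_pos.2 huf) hny
  refine ⟨(‖y‖)⁻¹ • (-y), ?_, (f v - u)/‖y‖, hδ, ?_⟩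
  · rw [norm_smul, norm_neg, Real.norm_eq_abs, abs_of_pos (by positivity)]
    field_simp
  · intro w hw
    have h1 := hfu w (subset_convexHull ℝ _ (by exact_mod_cast hw))
    rw [hyval] at h1
    have e1 : ⟪v, (‖y‖)⁻¹ • (-y)⟫ = -⟪y, v⟫/‖y‖ := by
      rw [real_inner_smul_right, inner_neg_right, real_inner_comm]
      field_simp
    have e2 : ⟪w, (‖y‖)⁻¹ • (-y)⟫ = -⟪y, w⟫/‖y‖ := by
      rw [real_inner_smul_right, inner_neg_right, real_inner_comm]
      field_simp
    rw [e1, e2, hyval, ← add_div, div_le_div_iff₀ hny hny]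
    nlinarith [h1]
lemma ray_lemma (In Out : Finset Plane) (c v : Plane) (hv : ‖v‖ = 1)
    (rin rout : ℝ) (hrin : 0 < rin) (hrr : rin < rout)
    (p q : Plane) (hpIn : p ∈ In) (hqOut : q ∈ Out)
    (hp : c - p = rin • v) (hq : c - q = rout • v)
    (hInle : ∀ x ∈ In, dist x c ≤ rin)
    (hOutge : ∀ y ∈ Out, rout ≤ dist y c)
    (hIn2 : (In.erase p).Nonempty)
    (hstrict : ∀ x ∈ In.erase p, dist x c < rin) :
    ∃ z r1 R1, 0 < r1 ∧ r1 < R1 ∧ R1 - r1 = rout - rin ∧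
      dist p z = r1 ∧ dist q z = R1 ∧
      (∃ p1 ∈ In, p1 ≠ p ∧ dist p1 z = r1) ∧
      (∀ x ∈ In, dist x z ≤ r1) ∧ (∀ y ∈ Out, R1 ≤ dist y z) ∧
      p ∈ segment ℝ z q := by
  have hpc : p = c - rin • v := by rw [← hp]; module
  have hqc : q = c - rout • v := by rw [← hq]; module
  set β : Plane → ℝ := fun x => ⟪c - x, v⟫ - rin with hβ
  have hβneg : ∀ x ∈ In.erase p, β x < 0 := by
    intro x hx
    have h1 : ⟪c - x, v⟫ ≤ ‖c - x‖ := by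
      have := real_inner_le_norm (c - x) v
      rwa [hv, mul_one] at this
    have h2 : ‖c - x‖ = dist x c := by rw [dist_eq_norm, norm_sub_rev]
    have := hstrict x hx
    simp only [hβ]
    linarith [h1.trans_eq h2]
  set root : Plane → ℝ := fun x => (rin^2 - dist x c^2) / (2 * β x) with hroot
  have hcan : ∀ x ∈ In.erase p, root x * (2 * β x) = rin^2 - dist x c^2 := by
    intro x hx
    exact div_mul_cancel₀ _ (by have := hβneg x hx; intro h; nlinarith)
  have hrootneg : ∀ x ∈ In.erase p, root x < 0 := by
    intro x hx
    apply div_neg_of_pos_of_neg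
    · have := hstrict x hx
      have := dist_nonneg (x := x) (y := c)
      nlinarith
    · linarith [hβneg x hx]
  have hrootgt : ∀ x ∈ In.erase p, -rin < root x := by
    intro x hx
    have hb := hβneg x hx
    rw [hroot]
    rw [lt_div_iff_of_neg (by linarith)]
    have hxp : x ≠ p := Finset.ne_of_mem_erase hx
    have hpx : (0:ℝ) < ‖p - x‖^2 :=
      pow_pos (norm_pos_iff.2 (sub_ne_zero.2 (Ne.symm hxp))) 2
    have hiden : ‖p - x‖^2 = dist x c^2 + rin^2 - 2*rin*⟪c - x, v⟫ := by
      have h0 : p - x = (c - x) - rin • v := by rw [hpc]; module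
      rw [h0, norm_sub_sq_real, real_inner_smul_right, norm_smul, Real.norm_eq_abs,
        abs_of_pos hrin, hv]
      have h2 : ‖c - x‖ = dist x c := by rw [dist_eq_norm, norm_sub_rev]
      rw [h2]; ring
    simp only [hβ]
    nlinarith [hpx, hiden]
  set t1 : ℝ := (In.erase p).sup' hIn2 root with ht1
  obtain ⟨p1, hp1mem, hp1eq⟩ := Finset.exists_mem_eq_sup' hIn2 root
  have ht1neg : t1 < 0 := by
    rw [ht1, Finset.sup'_lt_iff]
    exact fun x hx => hrootneg x hx
  have ht1gt : -rin < t1 := by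
    rw [ht1, hp1eq]; exact hrootgt p1 hp1mem
  have hrootle : ∀ x ∈ In.erase p, root x ≤ t1 := by
    intro x hx; rw [ht1]; exact Finset.le_sup' root hx
  have hrootp1 : root p1 = t1 := by rw [ht1, hp1eq]
  clear_value t1 root β
  set z : Plane := c + t1 • v with hz
  set r1 : ℝ := rin + t1 with hr1
  set R1 : ℝ := rout + t1 with hR1
  have hr1pos : 0 < r1 := by simp only [hr1]; linarith
  have hr1R1 : r1 < R1 := by simp only [hr1, hR1]; linarith
  have hdistp : dist p z = r1 := by
    rw [dist_eq_norm, hpc, hz]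
    have h0 : c - rin • v - (c + t1 • v) = (-(rin + t1)) • v := by module
    rw [h0, norm_smul, hv, Real.norm_eq_abs, mul_one, abs_neg, abs_of_pos hr1pos]
  have hdistq : dist q z = R1 := by
    rw [dist_eq_norm, hqc, hz]
    have h0 : c - rout • v - (c + t1 • v) = (-(rout + t1)) • v := by module
    rw [h0, norm_smul, hv, Real.norm_eq_abs, mul_one, abs_neg, abs_of_pos (by linarith)]
  have hInz : ∀ x ∈ In, dist x z ≤ r1 := by
    intro x hx
    by_cases hxp : x = p
    · rw [hxp, hdistp]
    · have hxe : x ∈ In.erase p := Finset.mem_erase.2 ⟨hxp, hx⟩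
      have hb := hβneg x hxe
      have hle : root x ≤ t1 := hrootle x hxe
      have hc0 := hcan x hxe
      have hmul : 2 * t1 * β x ≤ 2 * (root x) * β x := by nlinarith
      have hsq : dist x z^2 ≤ r1^2 := by
        rw [hz, dist_sq_line x c v hv t1]
        simp only [hβ] at hb hc0 hmul
        simp only [hr1]
        linarith [hmul, hc0]
      exact le_of_sq_le'' hsq hr1pos.le
  have hp1z : dist p1 z = r1 := by
    have hb := hβneg p1 hp1mem
    have hc0 := hcan p1 hp1mem
    rw [hrootp1] at hc0
    have hsq : dist p1 z^2 = r1^2 := by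
      rw [hz, dist_sq_line p1 c v hv t1]
      simp only [hβ] at hc0
      simp only [hr1]
      linarith [hc0]
    exact eq_of_sq_eq'' hsq dist_nonneg hr1pos.le
  have hOutz : ∀ y ∈ Out, R1 ≤ dist y z := by
    intro y hy
    set a : ℝ := ⟪c - y, v⟫ with ha
    have hdy := hOutge y hy
    have hdyn : 0 ≤ dist y c := dist_nonneg
    have hkey : 0 ≤ 2 * t1 * (a - rout) + (dist y c^2 - rout^2) := by
      rcases le_or_gt a rout with hcase | hcase
      · nlinarith
      · by_contra hneg
        push_neg at hneg
        set t0 : ℝ := (rout^2 - dist y c^2) / (2 * (a - rout)) with ht0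
        have hden : 0 < 2 * (a - rout) := by linarith
        have ht0root : t0 * (2 * (a - rout)) = rout^2 - dist y c^2 :=
          div_mul_cancel₀ _ (by positivity)
        have ht0ge : t1 < t0 := by nlinarith
        have hR1' : 0 < rout + t0 := by linarith
        have hsq : dist y (c + t0 • v)^2 = (rout + t0)^2 := by
          rw [dist_sq_line y c v hv t0]
          simp only [ha] at ht0root
          nlinarith
        have hdeq : dist y (c + t0 • v) = rout + t0 :=
          eq_of_sq_eq'' hsq dist_nonneg hR1'.le
        have hcs : ⟪(c + t0 • v) - y, v⟫ ≤ ‖(c + t0 • v) - y‖ := by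
          have := real_inner_le_norm ((c + t0 • v) - y) v
          rwa [hv, mul_one] at this
        have hnormeq : ‖(c + t0 • v) - y‖ = rout + t0 := by
          rw [← hdeq, dist_eq_norm, norm_sub_rev]
        have hinner : ⟪(c + t0 • v) - y, v⟫ = a + t0 := by
          have h0 : (c + t0 • v) - y = (c - y) + t0 • v := by module
          rw [h0, inner_add_left, real_inner_smul_left, real_inner_self_eq_norm_sq, hv]
          simp [ha]
        rw [hinner, hnormeq] at hcs
        linarith
    have hsq : R1^2 ≤ dist y z^2 := by
      rw [hz, dist_sq_line y c v hv t1]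
      simp only [ha] at hkey
      simp only [hR1]
      nlinarith
    exact le_of_sq_le'' hsq dist_nonneg
  have hseg : p ∈ segment ℝ z q := by
    refine ⟨1 - r1/R1, r1/R1, ?_, ?_, by ring, ?_⟩
    · have h1 : r1/R1 ≤ 1 := by
        rw [div_le_one (by linarith)]; linarith
      linarith
    · exact div_nonneg hr1pos.le (by linarith)
    · have hqz : q - z = (-R1) • v := by rw [hqc, hz]; simp only [hR1]; module
      have hcoef : (r1/R1) • ((-R1) • v) = (-r1) • v := by
        rw [smul_smul]
        congr 1
        have hR1ne : R1 ≠ 0 := ne_of_gt (by linarith)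
        field_simp
      have hfin : (1 - r1/R1) • z + (r1/R1) • q = z + (r1/R1) • (q - z) := by
        module
      rw [hfin, hqz, hcoef, hpc, hz]
      simp only [hr1]
      module
  exact ⟨z, r1, R1, hr1pos, hr1R1, by simp only [hr1, hR1]; ring, hdistp, hdistq,
    ⟨p1, Finset.mem_of_mem_erase hp1mem, Finset.ne_of_mem_erase hp1mem, hp1z⟩,
    hInz, hOutz, hseg⟩

/-- A set of points is rainbow if it contains at least one point of each of the `k` colors. -/
def IsRainbow (k : ℕ) (α : Plane → Fin k) (S : Set Plane) : Prop :=
  ∀ i : Fin k, ∃ p ∈ S, α p = i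

/-- A rainbow-bisecting empty circular annulus (RBCA) for `P`, with center `c`, inner
radius `rin` and outer radius `rout` (its width is `rout - rin`): its open interior
contains no point of `P`, the points of `P` at distance at most `rin` from `c` form a
rainbow set, and the points of `P` at distance at least `rout` from `c` form a rainbow
set. -/
def IsRBCA (k : ℕ) (P : Finset Plane) (α : Plane → Fin k)
    (c : Plane) (rin rout : ℝ) : Prop :=
  0 ≤ rin ∧ rin ≤ rout ∧
  (∀ p ∈ P, ¬ (rin < dist p c ∧ dist p c < rout)) ∧
  IsRainbow k α {p | p ∈ P ∧ dist p c ≤ rin} ∧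
  IsRainbow k α {p | p ∈ P ∧ rout ≤ dist p c}

/-- `A ∈ F`: an RBCA for `P` whose closed inner disk contains at least two points of `P`. -/
def InF (k : ℕ) (P : Finset Plane) (α : Plane → Fin k)
    (c : Plane) (rin rout : ℝ) : Prop :=
  IsRBCA k P α c rin rout ∧
  ∃ p ∈ P, ∃ q ∈ P, p ≠ q ∧ dist p c ≤ rin ∧ dist q c ≤ rin

lemma mk_InF {k : ℕ} {P : Finset Plane} {α : Plane → Fin k} (In Out : Finset Plane)
    (hInP : In ⊆ P) (hOutP : Out ⊆ P) (hcov : ∀ x ∈ P, x ∈ In ∨ x ∈ Out)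
    {z : Plane} {ri ro : ℝ} (hri : 0 ≤ ri) (hrio : ri ≤ ro)
    (hInle : ∀ x ∈ In, dist x z ≤ ri) (hOutge : ∀ y ∈ Out, ro ≤ dist y z)
    (hInrb : ∀ i, ∃ x ∈ In, α x = i) (hOutrb : ∀ i, ∃ x ∈ Out, α x = i)
    {p₀ q₀ : Plane} (hp₀ : p₀ ∈ In) (hq₀ : q₀ ∈ In) (hpq : p₀ ≠ q₀) :
    InF k P α z ri ro := by
  refine ⟨⟨hri, hrio, ?_, ?_, ?_⟩, p₀, hInP hp₀, q₀, hInP hq₀, hpq, hInle _ hp₀, hInle _ hq₀⟩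
  · rintro x hx ⟨h1, h2⟩
    rcases hcov x hx with h | h
    · exact absurd (hInle x h) (not_le.2 h1)
    · exact absurd (hOutge x h) (not_le.2 h2)
  · intro i
    obtain ⟨x, hx, hxi⟩ := hInrb i
    exact ⟨x, ⟨hInP hx, hInle x hx⟩, hxi⟩
  · intro i
    obtain ⟨x, hx, hxi⟩ := hOutrb i
    exact ⟨x, ⟨hOutP hx, hOutge x hx⟩, hxi⟩

lemma seg_of_rel {c p q : Plane} {rin rout : ℝ} (hrin : 0 ≤ rin) (hrr : rin ≤ rout)
    (hroutpos : 0 < rout) (hrel : rout • (c - p) = rin • (c - q)) :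
    p ∈ segment ℝ c q := by
  have hcp : c - p = (rin/rout) • (c - q) := by
    have h := congrArg (fun x => rout⁻¹ • x) hrel
    simp only [smul_smul] at h
    rw [inv_mul_cancel₀ (ne_of_gt hroutpos), one_smul] at h
    rw [h, div_eq_inv_mul]
  refine ⟨1 - rin/rout, rin/rout, ?_, div_nonneg hrin hroutpos.le, by ring, ?_⟩
  · have : rin/rout ≤ 1 := by rw [div_le_one hroutpos]; exact hrr
    linarith
  · have hp : p = c - (rin/rout) • (c - q) := by rw [← hcp]; module
    rw [hp]; module

lemma rel_of_seg {c p q : Plane} {rin rout : ℝ} (hrout : 0 < rout)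
    (hd1 : dist p c = rin) (hd2 : dist q c = rout) (hseg : p ∈ segment ℝ c q) :
    rout • (c - p) = rin • (c - q) := by
  obtain ⟨a, b, _, hb, hab, habc⟩ := hseg
  have ha' : a = 1 - b := by linarith
  subst ha'
  have hcp : c - p = b • (c - q) := by rw [← habc]; module
  have h1 : rin = b * rout := by
    rw [← hd1, ← hd2, dist_eq_norm, dist_eq_norm, norm_sub_rev p c, norm_sub_rev q c, hcp,
      norm_smul, Real.norm_eq_abs, abs_of_nonneg hb]
  rw [hcp, smul_smul, h1, mul_comm]

/-- An RBCA is special if some point of `P` on the inner circle lies on the segment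
joining the center to a point of `P` on the outer circle. -/
def IsSpecial (P : Finset Plane) (c : Plane) (rin rout : ℝ) : Prop :=
  ∃ p1 ∈ P, ∃ p2 ∈ P, dist p1 c = rin ∧ dist p2 c = rout ∧ p1 ∈ segment ℝ c p2

/-- A maximum-width member of `F` can be replaced by a member of `F` of the same width
that either (i) is not special and has at least two points of `P` on each of its inner
and outer circles, or (ii) is special, has a point of `P` on its outer circle and at
least two points of `P` on its inner circle. -/
theorem maxWidth_RBCA_configurations (k : ℕ) (P : Finset Plane) (α : Plane → Fin k)
    (htwo : ∀ i : Fin k, ∃ p ∈ P, ∃ q ∈ P, p ≠ q ∧ α p = i ∧ α q = i)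
    (hconcyclic : ∀ (c : Plane) (r : ℝ), {p : Plane | p ∈ P ∧ dist p c = r}.ncard ≤ 3)
    (c : Plane) (rin rout : ℝ) (hA : InF k P α c rin rout)
    (hmax : ∀ c' rin' rout', InF k P α c' rin' rout' → rout' - rin' ≤ rout - rin) :
    ∃ c' rin' rout', InF k P α c' rin' rout' ∧ rout' - rin' = rout - rin ∧
      ((¬ IsSpecial P c' rin' rout' ∧
        (∃ p ∈ P, ∃ q ∈ P, p ≠ q ∧ dist p c' = rin' ∧ dist q c' = rin') ∧
        (∃ p ∈ P, ∃ q ∈ P, p ≠ q ∧ dist p c' = rout' ∧ dist q c' = rout')) ∨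
       (IsSpecial P c' rin' rout' ∧
        (∃ p ∈ P, dist p c' = rout') ∧
        (∃ p ∈ P, ∃ q ∈ P, p ≠ q ∧ dist p c' = rin' ∧ dist q c' = rin'))) := by
  classical
  obtain ⟨⟨hrin0, hrinout, hempty, hinrb, houtrb⟩, p₀, hp₀P, q₀, hq₀P, hpq₀, hp₀d, hq₀d⟩ := hA
  have hAre : InF k P α c rin rout :=
    ⟨⟨hrin0, hrinout, hempty, hinrb, houtrb⟩, p₀, hp₀P, q₀, hq₀P, hpq₀, hp₀d, hq₀d⟩
  rcases Nat.eq_zero_or_pos k with hk0 | hkpos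
  · -- no colors: contradiction with maximality
    exfalso
    subst hk0
    have hPne : P.Nonempty := ⟨p₀, hp₀P⟩
    set D := P.sup' hPne (fun x => dist x c) with hD
    have hD0 : (0:ℝ) ≤ D := le_trans dist_nonneg (Finset.le_sup' (fun x => dist x c) hp₀P)
    have hIF : InF 0 P α c D (D + (rout - rin) + 1) := by
      refine ⟨⟨hD0, by linarith, ?_, fun i => i.elim0, fun i => i.elim0⟩,
        p₀, hp₀P, q₀, hq₀P, hpq₀, Finset.le_sup' (fun x => dist x c) hp₀P, Finset.le_sup' (fun x => dist x c) hq₀P⟩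
      rintro x hx ⟨h1, h2⟩
      exact absurd (Finset.le_sup' (fun y => dist y c) hx) (not_le.2 h1)
    have := hmax _ _ _ hIF
    linarith
  rcases eq_or_lt_of_le hrinout with heq | hlt
  · -- zero width case : rin = rout
    by_cases hM2 : ∃ a ∈ P, ∃ b ∈ P, a ≠ b ∧ dist a c = rin ∧ dist b c = rin
    · obtain ⟨a, haP, b, hbP, hab, had, hbd⟩ := hM2
      exact ⟨c, rin, rout, hAre, rfl,
        Or.inr ⟨⟨a, haP, a, haP, had, by rw [← heq]; exact had, right_mem_segment ℝ c a⟩,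
          ⟨a, haP, by rw [← heq]; exact had⟩,
          ⟨a, haP, b, hbP, hab, had, hbd⟩⟩⟩
    · have hM1 : ∀ a ∈ P, ∀ b ∈ P, dist a c = rin → dist b c = rin → a = b := by
        intro a ha b hb hda hdb
        by_contra hne
        exact hM2 ⟨a, ha, b, hb, hne, hda, hdb⟩
      set O := P.filter (fun x => rin < dist x c) with hO'
      by_cases hO : O.Nonempty
      · by_cases hOr : ∀ i, ∃ x ∈ O, α x = i
        · exfalso
          set ro := O.inf' hO (fun x => dist x c) with hro
          have hrogt : rin < ro :=
            (Finset.lt_inf'_iff hO).2 (fun x hx => (Finset.mem_filter.1 hx).2)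
          have hIF : InF k P α c rin ro := by
            refine mk_InF (P.filter (fun x => dist x c ≤ rin)) O
              (Finset.filter_subset _ _) (Finset.filter_subset _ _)
              (fun x hx => ?_) hrin0 hrogt.le
              (fun x hx => (Finset.mem_filter.1 hx).2)
              (fun y hy => Finset.inf'_le (fun x => dist x c) hy)
              (fun i => ?_) hOr
              (Finset.mem_filter.2 ⟨hp₀P, hp₀d⟩) (Finset.mem_filter.2 ⟨hq₀P, hq₀d⟩) hpq₀
            · by_cases h : dist x c ≤ rin
              · exact Or.inl (Finset.mem_filter.2 ⟨hx, h⟩)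
              · exact Or.inr (Finset.mem_filter.2 ⟨hx, not_le.1 h⟩)
            · obtain ⟨x, ⟨hxP, hxd⟩, hxi⟩ := hinrb i
              exact ⟨x, Finset.mem_filter.2 ⟨hxP, hxd⟩, hxi⟩
          have := hmax _ _ _ hIF
          linarith
        · push_neg at hOr
          obtain ⟨i, hi⟩ := hOr
          obtain ⟨m, ⟨hmP, hmd⟩, hmi⟩ := houtrb i
          have hmnotO : ¬ rin < dist m c := fun h => hi m (Finset.mem_filter.2 ⟨hmP, h⟩) hmi
          have hmdin : dist m c = rin := le_antisymm (not_lt.1 hmnotO) (heq ▸ hmd)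
          obtain ⟨x1, hx1P, x2, hx2P, hx12, hx1i, hx2i⟩ := htwo i
          set x' := if x1 = m then x2 else x1 with hx'
          have hx'P : x' ∈ P := by rw [hx']; split <;> assumption
          have hx'i : α x' = i := by rw [hx']; split <;> assumption
          have hx'm : x' ≠ m := by
            rw [hx']; split
            · rename_i h; rw [← h]; exact hx12.symm
            · assumption
          have hx'le : dist x' c ≤ rin := by
            by_contra h
            exact hi x' (Finset.mem_filter.2 ⟨hx'P, not_le.1 h⟩) hx'i
          have hx'lt : dist x' c < rin := by
            rcases lt_or_eq_of_le hx'le with h | h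
            · exact h
            · exact absurd (hM1 x' hx'P m hmP h hmdin) hx'm
          set I := P.filter (fun x => dist x c < rin) with hI'
          have hx'I : x' ∈ I := Finset.mem_filter.2 ⟨hx'P, hx'lt⟩
          by_cases hI2 : ∃ a ∈ I, ∃ b ∈ I, a ≠ b
          · exfalso
            obtain ⟨a2, ha2, b2, hb2, hab2⟩ := hI2
            have hIne : I.Nonempty := ⟨x', hx'I⟩
            set ri := I.sup' hIne (fun x => dist x c) with hri'
            have hrilt : ri < rin :=
              (Finset.sup'_lt_iff hIne).2 (fun x hx => (Finset.mem_filter.1 hx).2)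
            have hri0 : 0 ≤ ri := le_trans dist_nonneg (Finset.le_sup' (fun x => dist x c) hx'I)
            have hIF : InF k P α c ri rin := by
              refine mk_InF I (P.filter (fun x => rin ≤ dist x c))
                (Finset.filter_subset _ _) (Finset.filter_subset _ _)
                (fun x hx => ?_) hri0 hrilt.le
                (fun x hx => Finset.le_sup' (fun y => dist y c) hx)
                (fun y hy => (Finset.mem_filter.1 hy).2)
                (fun j => ?_) (fun j => ?_) ha2 hb2 hab2
              · by_cases h : dist x c < rin
                · exact Or.inl (Finset.mem_filter.2 ⟨hx, h⟩)
                · exact Or.inr (Finset.mem_filter.2 ⟨hx, not_lt.1 h⟩)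
              · by_cases hji : j = i
                · exact ⟨x', hx'I, by rw [hx'i, hji]⟩
                · obtain ⟨z, ⟨hzP, hzle⟩, hzj⟩ := hinrb j
                  have hzm : z ≠ m := by
                    intro h
                    rw [h, hmi] at hzj
                    exact hji hzj.symm
                  have hzlt : dist z c < rin := by
                    rcases lt_or_eq_of_le hzle with h | h
                    · exact h
                    · exact absurd (hM1 z hzP m hmP h hmdin) hzm
                  exact ⟨z, Finset.mem_filter.2 ⟨hzP, hzlt⟩, hzj⟩
              · obtain ⟨y, ⟨hyP, hyd⟩, hyj⟩ := houtrb j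
                exact ⟨y, Finset.mem_filter.2 ⟨hyP, heq ▸ hyd⟩, hyj⟩
            have := hmax _ _ _ hIF
            linarith
          · have hIone : ∀ a ∈ I, a = x' := by
              intro a ha
              by_contra hne
              exact hI2 ⟨a, ha, x', hx'I, hne⟩
            have hallcol : ∀ j : Fin k, j = i := by
              intro j
              obtain ⟨z, ⟨hzP, hzle⟩, hzj⟩ := hinrb j
              rcases lt_or_eq_of_le hzle with h | h
              · have hzI : z ∈ I := Finset.mem_filter.2 ⟨hzP, h⟩
                rw [hIone z hzI, hx'i] at hzj
                exact hzj.symm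
              · rw [hM1 z hzP m hmP h hmdin, hmi] at hzj
                exact hzj.symm
            exfalso
            obtain ⟨o, hoO⟩ := hO
            exact hi o hoO (hallcol (α o))
      · -- O empty : all points within distance rin
        have hnoO : ∀ x ∈ P, ¬ rin < dist x c := by
          intro x hx h
          exact hO ⟨x, Finset.mem_filter.2 ⟨hx, h⟩⟩
        obtain ⟨m, ⟨hmP, hmd⟩, hmi⟩ := houtrb ⟨0, hkpos⟩
        have hmdin : dist m c = rin := le_antisymm (not_lt.1 (hnoO m hmP)) (heq ▸ hmd)
        have hallcol : ∀ j : Fin k, j = α m := by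
          intro j
          obtain ⟨y, ⟨hyP, hyd⟩, hyj⟩ := houtrb j
          have hydin : dist y c = rin := le_antisymm (not_lt.1 (hnoO y hyP)) (heq ▸ hyd)
          rw [hM1 y hyP m hmP hydin hmdin] at hyj
          exact hyj.symm
        set y := if p₀ = m then q₀ else p₀ with hy'
        have hyP : y ∈ P := by rw [hy']; split <;> assumption
        have hym : y ≠ m := by
          rw [hy']; split
          · rename_i h; rw [← h]; exact hpq₀.symm
          · assumption
        set z := midpoint ℝ m y with hz'
        set ρ := dist m z with hρ'
        have hdyz : dist y z = ρ := by
          rw [hρ', hz', dist_comm m _, dist_comm y _, dist_midpoint_left, dist_midpoint_right]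
        have hwidth : ρ - ρ = rout - rin := by rw [← heq]; ring
        refine ⟨z, ρ, ρ, ⟨⟨dist_nonneg, le_refl ρ, ?_, ?_, ?_⟩,
            m, hmP, y, hyP, Ne.symm hym, le_refl ρ, le_of_eq hdyz⟩, hwidth,
          Or.inr ⟨⟨m, hmP, m, hmP, rfl, rfl, right_mem_segment ℝ z m⟩,
            ⟨m, hmP, rfl⟩,
            ⟨m, hmP, y, hyP, Ne.symm hym, rfl, hdyz⟩⟩⟩
        · rintro x hx ⟨h1, h2⟩
          linarith
        · intro j
          exact ⟨m, ⟨hmP, le_refl ρ⟩, (hallcol j).symm⟩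
        · intro j
          exact ⟨m, ⟨hmP, le_refl ρ⟩, (hallcol j).symm⟩
  · -- positive width case
    have hrinpos : 0 < rin := by
      rcases eq_or_lt_of_le hrin0 with h | h
      · exfalso
        apply hpq₀
        have h1 : dist p₀ c ≤ 0 := by rw [h]; exact hp₀d
        have h2 : dist q₀ c ≤ 0 := by rw [h]; exact hq₀d
        have e1 := dist_le_zero.1 h1
        have e2 := dist_le_zero.1 h2
        rw [e1, e2]
      · exact h
    set In := P.filter (fun x => dist x c ≤ rin) with hIn'
    set Out := P.filter (fun x => ¬ dist x c ≤ rin) with hOut'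
    have hInP : In ⊆ P := Finset.filter_subset _ _
    have hOutP : Out ⊆ P := Finset.filter_subset _ _
    have hcov : ∀ x ∈ P, x ∈ In ∨ x ∈ Out := by
      intro x hx
      by_cases h : dist x c ≤ rin
      · exact Or.inl (Finset.mem_filter.2 ⟨hx, h⟩)
      · exact Or.inr (Finset.mem_filter.2 ⟨hx, h⟩)
    have hInle : ∀ x ∈ In, dist x c ≤ rin := fun x hx => (Finset.mem_filter.1 hx).2
    have hOutge : ∀ y ∈ Out, rout ≤ dist y c := by
      intro y hy
      have h1 : ¬ dist y c ≤ rin := (Finset.mem_filter.1 hy).2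
      have h2 := hempty y (hOutP hy)
      push_neg at h2
      exact h2 (not_le.1 h1)
    have hInrb : ∀ i, ∃ x ∈ In, α x = i := by
      intro i; obtain ⟨x, ⟨hxP, hxd⟩, hxi⟩ := hinrb i
      exact ⟨x, Finset.mem_filter.2 ⟨hxP, hxd⟩, hxi⟩
    have hOutrb : ∀ i, ∃ x ∈ Out, α x = i := by
      intro i; obtain ⟨x, ⟨hxP, hxd⟩, hxi⟩ := houtrb i
      exact ⟨x, Finset.mem_filter.2 ⟨hxP, not_le.2 (lt_of_lt_of_le hlt hxd)⟩, hxi⟩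
    have hp₀In : p₀ ∈ In := Finset.mem_filter.2 ⟨hp₀P, hp₀d⟩
    have hq₀In : q₀ ∈ In := Finset.mem_filter.2 ⟨hq₀P, hq₀d⟩
    have hInne : In.Nonempty := ⟨p₀, hp₀In⟩
    have hOutne : Out.Nonempty := by
      obtain ⟨x, hx, _⟩ := hOutrb ⟨0, hkpos⟩
      exact ⟨x, hx⟩
    have hroutpos : (0:ℝ) < rout := lt_trans hrinpos hlt
    -- snap radii: there are contact points on both circles
    have hsnap : ∃ ps ∈ In, ∃ qs ∈ Out, dist ps c = rin ∧ dist qs c = rout := by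
      set R := In.sup' hInne (fun x => dist x c) with hR
      set S := Out.inf' hOutne (fun x => dist x c) with hS
      have hRle : R ≤ rin := Finset.sup'_le hInne _ hInle
      have hSge : rout ≤ S := Finset.le_inf' hOutne _ hOutge
      have hR0 : 0 ≤ R := le_trans dist_nonneg (Finset.le_sup' (fun x => dist x c) hp₀In)
      have hIF : InF k P α c R S :=
        mk_InF In Out hInP hOutP hcov hR0 (by linarith)
          (fun x hx => Finset.le_sup' (fun y => dist y c) hx)
          (fun y hy => Finset.inf'_le (fun x => dist x c) hy)
          hInrb hOutrb hp₀In hq₀In hpq₀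
      have hwle := hmax _ _ _ hIF
      have hReq : R = rin := by linarith
      have hSeq : S = rout := by linarith
      obtain ⟨ps, hps, hpsd⟩ := Finset.exists_mem_eq_sup' hInne (fun x => dist x c)
      obtain ⟨qs, hqs, hqsd⟩ := Finset.exists_mem_eq_inf' hOutne (fun x => dist x c)
      refine ⟨ps, hps, qs, hqs, ?_, ?_⟩
      · rw [← hpsd]; exact hReq
      · rw [← hqsd]; exact hSeq
    obtain ⟨ps, hpsIn, qs, hqsOut, hpsd, hqsd⟩ := hsnap
    by_cases hspec : ∃ p ∈ In, ∃ qq ∈ Out, dist p c = rin ∧ dist qq c = rout ∧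
        rout • (c - p) = rin • (c - qq)
    · obtain ⟨p, hpIn, qq, hqqOut, hpd, hqqd, hrel⟩ := hspec
      have hseg0 : p ∈ segment ℝ c qq := seg_of_rel hrin0 hrinout hroutpos hrel
      by_cases hsecond : ∃ p' ∈ In, p' ≠ p ∧ dist p' c = rin
      · obtain ⟨p', hp'In, hp'ne, hp'd⟩ := hsecond
        exact ⟨c, rin, rout, hAre, rfl,
          Or.inr ⟨⟨p, hInP hpIn, qq, hOutP hqqOut, hpd, hqqd, hseg0⟩,
            ⟨qq, hOutP hqqOut, hqqd⟩,
            ⟨p, hInP hpIn, p', hInP hp'In, Ne.symm hp'ne, hpd, hp'd⟩⟩⟩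
      · -- single contact point on the inner circle: ray motion
        have hstrict : ∀ x ∈ In.erase p, dist x c < rin := by
          intro x hx
          rcases lt_or_eq_of_le (hInle x (Finset.mem_of_mem_erase hx)) with h | h
          · exact h
          · exact absurd ⟨x, Finset.mem_of_mem_erase hx, Finset.ne_of_mem_erase hx, h⟩ hsecond
        have hIn2 : (In.erase p).Nonempty := by
          by_cases h : p₀ = p
          · exact ⟨q₀, Finset.mem_erase.2 ⟨by rw [← h]; exact hpq₀.symm, hq₀In⟩⟩
          · exact ⟨p₀, Finset.mem_erase.2 ⟨h, hp₀In⟩⟩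
        set v := rin⁻¹ • (c - p) with hv'
        have hncp : ‖c - p‖ = rin := by rw [norm_sub_rev, ← dist_eq_norm]; exact hpd
        have hv : ‖v‖ = 1 := by
          rw [hv', norm_smul, Real.norm_eq_abs, abs_of_pos (inv_pos.2 hrinpos), hncp]
          field_simp
        have hpv : c - p = rin • v := by
          rw [hv', smul_smul, mul_inv_cancel₀ (ne_of_gt hrinpos), one_smul]
        have hqv : c - qq = rout • v := by
          have h1 : rin • (c - qq) = (rout * rin) • v := by
            rw [← hrel, hpv, smul_smul]
          have h2 := congrArg (fun x => rin⁻¹ • x) h1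
          simp only [smul_smul] at h2
          rw [inv_mul_cancel₀ (ne_of_gt hrinpos), one_smul] at h2
          rw [h2]
          congr 1
          rw [mul_comm rout rin, ← mul_assoc, inv_mul_cancel₀ (ne_of_gt hrinpos), one_mul]
        obtain ⟨z, r1, R1, hr1pos, hr1R1, hwid, hdp, hdq,
            ⟨p1, hp1In, hp1ne, hp1d⟩, hInz, hOutz, hsegz⟩ :=
          ray_lemma In Out c v hv rin rout hrinpos hlt p qq hpIn hqqOut hpv hqv
            hInle hOutge hIn2 hstrict
        have hIF : InF k P α z r1 R1 :=
          mk_InF In Out hInP hOutP hcov hr1pos.le hr1R1.le hInz hOutz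
            hInrb hOutrb hp₀In hq₀In hpq₀
        exact ⟨z, r1, R1, hIF, hwid,
          Or.inr ⟨⟨p, hInP hpIn, qq, hOutP hqqOut, hdp, hdq, hsegz⟩,
            ⟨qq, hOutP hqqOut, hdq⟩,
            ⟨p, hInP hpIn, p1, hInP hp1In, Ne.symm hp1ne, hdp, hp1d⟩⟩⟩
    · -- not special
      have hnotspec : ¬ IsSpecial P c rin rout := by
        rintro ⟨s1, hs1P, s2, hs2P, hs1d, hs2d, hseg⟩
        apply hspec
        refine ⟨s1, Finset.mem_filter.2 ⟨hs1P, le_of_eq hs1d⟩, s2,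
          Finset.mem_filter.2 ⟨hs2P, not_le.2 (by rw [hs2d]; exact hlt)⟩,
          hs1d, hs2d, rel_of_seg hroutpos hs1d hs2d hseg⟩
      have hIn2 : ∃ a ∈ In, ∃ b ∈ In, a ≠ b ∧ dist a c = rin ∧ dist b c = rin := by
        by_contra hsing
        have hsing' : ∀ x ∈ In, dist x c = rin → x = ps := by
          intro x hx hxd
          by_contra hne
          exact hsing ⟨x, hx, ps, hpsIn, hne, hxd, hpsd⟩
        set v := rin⁻¹ • (c - ps) with hv'
        have hncp : ‖c - ps‖ = rin := by rw [norm_sub_rev, ← dist_eq_norm]; exact hpsd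
        have hv : ‖v‖ = 1 := by
          rw [hv', norm_smul, Real.norm_eq_abs, abs_of_pos (inv_pos.2 hrinpos), hncp]
          field_simp
        have hpsv : c - ps = rin • v := by
          rw [hv', smul_smul, mul_inv_cancel₀ (ne_of_gt hrinpos), one_smul]
        set W := (Out.filter (fun y => dist y c = rout)).image
          (fun y => rout⁻¹ • (c - y)) with hW'
        have hWne : W.Nonempty :=
          ⟨rout⁻¹ • (c - qs), Finset.mem_image.2
            ⟨qs, Finset.mem_filter.2 ⟨hqsOut, hqsd⟩, rfl⟩⟩
        have hWn : ∀ w ∈ W, ‖w‖ = 1 := by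
          intro w hw
          obtain ⟨y, hy, rfl⟩ := Finset.mem_image.1 hw
          have hyd := (Finset.mem_filter.1 hy).2
          rw [norm_smul, Real.norm_eq_abs, abs_of_pos (inv_pos.2 hroutpos),
            norm_sub_rev, ← dist_eq_norm, hyd]
          field_simp
        have hWv : ∀ w ∈ W, w ≠ v := by
          intro w hw heqv
          obtain ⟨y, hy, rfl⟩ := Finset.mem_image.1 hw
          apply hspec
          refine ⟨ps, hpsIn, y, (Finset.mem_filter.1 hy).1, hpsd,
            (Finset.mem_filter.1 hy).2, ?_⟩
          have hcy : c - y = rout • v := by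
            rw [← heqv, smul_smul, mul_inv_cancel₀ (ne_of_gt hroutpos), one_smul]
          calc rout • (c - ps) = rout • (rin • v) := by rw [hpsv]
            _ = (rout * rin) • v := smul_smul _ _ _
            _ = (rin * rout) • v := by rw [mul_comm]
            _ = rin • (rout • v) := (smul_smul _ _ _).symm
            _ = rin • (c - y) := by rw [hcy]
        obtain ⟨U, hU, δ, hδpos, hsep⟩ := sep_lemma W hWne hWn v hv hWv
        set δ' := min δ 2 with hδ''
        have hδ'pos : 0 < δ' := lt_min hδpos two_pos
        set θ := ⟪v, U⟫ with hθ'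
        have hvU1 : |⟪v, U⟫| ≤ 1 := by
          have := abs_real_inner_le_norm v U
          rwa [hv, hU, one_mul] at this
        have hθ1 : θ ≤ 1 := le_trans (le_abs_self _) hvU1
        have hθ2 : (-3:ℝ) ≤ θ := by
          have := neg_abs_le ⟪v, U⟫
          simp only [hθ']
          linarith
        have hInd : ∀ x ∈ In, dist x c = rin → ⟪c - x, U⟫ ≤ rin * θ := by
          intro x hx hxd
          rw [hsing' x hx hxd, hpsv, real_inner_smul_left]
        have hOutd : ∀ y ∈ Out, dist y c = rout → rout * (θ + δ') ≤ ⟪c - y, U⟫ := by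
          intro y hy hyd
          have hwmem : rout⁻¹ • (c - y) ∈ W :=
            Finset.mem_image.2 ⟨y, Finset.mem_filter.2 ⟨hy, hyd⟩, rfl⟩
          have h1 := hsep _ hwmem
          rw [real_inner_smul_left] at h1
          have h2 : θ + δ' ≤ rout⁻¹ * ⟪c - y, U⟫ :=
            le_trans (by linarith [min_le_left δ 2]) h1
          calc rout * (θ + δ') ≤ rout * (rout⁻¹ * ⟪c - y, U⟫) :=
                mul_le_mul_of_nonneg_left h2 hroutpos.le
            _ = ⟪c - y, U⟫ := by field_simp
        obtain ⟨z, ri, ro, hri0, hrio, hinz, houtz, hwgt⟩ :=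
          pert In Out hInne hOutne c U hU rin rout θ δ' hrinpos hlt hδ'pos
            (min_le_right _ _) hθ1 hθ2 hInle hOutge hInd hOutd
        have hIF := mk_InF In Out hInP hOutP hcov hri0 hrio hinz houtz
          hInrb hOutrb hp₀In hq₀In hpq₀
        exact absurd (hmax _ _ _ hIF) (not_le.2 hwgt)
      have hOut2 : ∃ a ∈ Out, ∃ b ∈ Out, a ≠ b ∧ dist a c = rout ∧ dist b c = rout := by
        by_contra hsing
        have hsing' : ∀ y ∈ Out, dist y c = rout → y = qs := by
          intro y hy hyd
          by_contra hne
          exact hsing ⟨y, hy, qs, hqsOut, hne, hyd, hqsd⟩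
        set w0 := rout⁻¹ • (c - qs) with hw0'
        have hncq : ‖c - qs‖ = rout := by rw [norm_sub_rev, ← dist_eq_norm]; exact hqsd
        have hw0 : ‖w0‖ = 1 := by
          rw [hw0', norm_smul, Real.norm_eq_abs, abs_of_pos (inv_pos.2 hroutpos), hncq]
          field_simp
        have hqsv : c - qs = rout • w0 := by
          rw [hw0', smul_smul, mul_inv_cancel₀ (ne_of_gt hroutpos), one_smul]
        set V := (In.filter (fun x => dist x c = rin)).image
          (fun x => rin⁻¹ • (c - x)) with hV'
        have hVne : V.Nonempty :=
          ⟨rin⁻¹ • (c - ps), Finset.mem_image.2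
            ⟨ps, Finset.mem_filter.2 ⟨hpsIn, hpsd⟩, rfl⟩⟩
        have hVn : ∀ u ∈ V, ‖u‖ = 1 := by
          intro u hu
          obtain ⟨x, hx, rfl⟩ := Finset.mem_image.1 hu
          have hxd := (Finset.mem_filter.1 hx).2
          rw [norm_smul, Real.norm_eq_abs, abs_of_pos (inv_pos.2 hrinpos),
            norm_sub_rev, ← dist_eq_norm, hxd]
          field_simp
        have hVw : ∀ u ∈ V, u ≠ w0 := by
          intro u hu heqv
          obtain ⟨x, hx, rfl⟩ := Finset.mem_image.1 hu
          apply hspec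
          refine ⟨x, (Finset.mem_filter.1 hx).1, qs, hqsOut,
            (Finset.mem_filter.1 hx).2, hqsd, ?_⟩
          have hcx : c - x = rin • w0 := by
            rw [← heqv, smul_smul, mul_inv_cancel₀ (ne_of_gt hrinpos), one_smul]
          calc rout • (c - x) = rout • (rin • w0) := by rw [hcx]
            _ = (rout * rin) • w0 := smul_smul _ _ _
            _ = (rin * rout) • w0 := by rw [mul_comm]
            _ = rin • (rout • w0) := (smul_smul _ _ _).symm
            _ = rin • (c - qs) := by rw [hqsv]
        obtain ⟨U0, hU0, δ, hδpos, hsep⟩ := sep_lemma V hVne hVn w0 hw0 hVw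
        set U := -U0 with hU'
        have hU : ‖U‖ = 1 := by rw [hU', norm_neg]; exact hU0
        set δ' := min δ 2 with hδ''
        have hδ'pos : 0 < δ' := lt_min hδpos two_pos
        have hw0U1 : |⟪w0, U⟫| ≤ 1 := by
          have := abs_real_inner_le_norm w0 U
          rwa [hw0, hU, one_mul] at this
        set θ := ⟪w0, U⟫ - δ' with hθ'
        have hθ1 : θ ≤ 1 := by
          have := le_abs_self ⟪w0, U⟫
          simp only [hθ']
          linarith
        have hθ2 : (-3:ℝ) ≤ θ := by
          have := neg_abs_le ⟪w0, U⟫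
          have hδ'2 : δ' ≤ 2 := min_le_right _ _
          simp only [hθ']
          linarith
        have hInd : ∀ x ∈ In, dist x c = rin → ⟪c - x, U⟫ ≤ rin * θ := by
          intro x hx hxd
          have humem : rin⁻¹ • (c - x) ∈ V :=
            Finset.mem_image.2 ⟨x, Finset.mem_filter.2 ⟨hx, hxd⟩, rfl⟩
          have h1 := hsep _ humem
          have eV : ⟪rin⁻¹ • (c - x), U0⟫ = rin⁻¹ * ⟪c - x, U0⟫ :=
            real_inner_smul_left _ _ _
          rw [eV] at h1
          have h2 : rin⁻¹ * ⟪c - x, U⟫ ≤ θ := by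
            have e2 : ⟪w0, U⟫ = -⟪w0, U0⟫ := by rw [hU', inner_neg_right]
            have e3 : ⟪c - x, U⟫ = -⟪c - x, U0⟫ := by rw [hU', inner_neg_right]
            have hδ'le : δ' ≤ δ := min_le_left _ _
            rw [e3, mul_neg]
            simp only [hθ', e2]
            linarith [h1]
          calc ⟪c - x, U⟫ = rin * (rin⁻¹ * ⟪c - x, U⟫) := by field_simp
            _ ≤ rin * θ := mul_le_mul_of_nonneg_left h2 hrinpos.le
        have hOutd : ∀ y ∈ Out, dist y c = rout → rout * (θ + δ') ≤ ⟪c - y, U⟫ := by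
          intro y hy hyd
          rw [hsing' y hy hyd, hqsv, real_inner_smul_left]
          have : θ + δ' = ⟪w0, U⟫ := by simp only [hθ']; ring
          rw [this]
        obtain ⟨z, ri, ro, hri0, hrio, hinz, houtz, hwgt⟩ :=
          pert In Out hInne hOutne c U hU rin rout θ δ' hrinpos hlt hδ'pos
            (min_le_right _ _) hθ1 hθ2 hInle hOutge hInd hOutd
        have hIF := mk_InF In Out hInP hOutP hcov hri0 hrio hinz houtz
          hInrb hOutrb hp₀In hq₀In hpq₀
        exact absurd (hmax _ _ _ hIF) (not_le.2 hwgt)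
      obtain ⟨a, haIn, b, hbIn, hab, had, hbd⟩ := hIn2
      obtain ⟨a2, ha2Out, b2, hb2Out, hab2, ha2d, hb2d⟩ := hOut2
      exact ⟨c, rin, rout, hAre, rfl,
        Or.inl ⟨hnotspec, ⟨a, hInP haIn, b, hInP hbIn, hab, had, hbd⟩,
          ⟨a2, hOutP ha2Out, b2, hOutP hb2Out, hab2, ha2d, hb2d⟩⟩⟩
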